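/- Let A be a symmetric positive-definite 3×3 real matrix, S := A⁻¹J(A−I), and m the associated symbol. If k₀ ∈ ℝ³ \ {0} is a real eigenvector of Sᵀ with real eigenvalue λ, i.e. Sᵀk₀ = λ k₀, then m(k₀) = 2λ. -/

import Mathlib

open Matrix

/-- The Coriolis-type matrix `J`. -/
noncomputable def Jmat : Matrix (Fin 3) (Fin 3) ℝ := !![0, -1, 0; 1, 0, 0; 0, 0, 0]

/-- The matrix `S := A⁻¹ J (A − I)`. -/
noncomputable def Smat (A : Matrix (Fin 3) (Fin 3) ℝ) : Matrix (Fin 3) (Fin 3) ℝ :=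
  A⁻¹ * Jmat * (A - 1)

/-- The symbol `m(x) = 2 (x · A⁻¹Jx)/(x · A⁻¹x)`. -/
noncomputable def symb (A : Matrix (Fin 3) (Fin 3) ℝ) (x : Fin 3 → ℝ) : ℝ :=
  2 * (x ⬝ᵥ (A⁻¹ * Jmat) *ᵥ x) / (x ⬝ᵥ A⁻¹ *ᵥ x)

lemma Jmat_transpose : Jmatᵀ = -Jmat := by
  ext i j
  fin_cases i <;> fin_cases j <;>
    norm_num [Jmat, Matrix.vecHead, Matrix.vecTail]

lemma antisym_zero {B : Matrix (Fin 3) (Fin 3) ℝ} (hB : Bᵀ = -B) (x : Fin 3 → ℝ) :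
    x ⬝ᵥ B *ᵥ x = 0 := by
  have h : x ⬝ᵥ B *ᵥ x = (Bᵀ *ᵥ x) ⬝ᵥ x := by
    rw [Matrix.dotProduct_mulVec, Matrix.mulVec_transpose]
  rw [hB] at h
  have h2 : (-B *ᵥ x) ⬝ᵥ x = -(x ⬝ᵥ B *ᵥ x) := by
    rw [Matrix.neg_mulVec, neg_dotProduct, dotProduct_comm]
  rw [h2] at h
  linarith

/-- if `k₀ ≠ 0` is a real eigenvector of `Sᵀ` with real eigenvalue `λ`,
then `m(k₀) = 2λ`. -/
theorem symb_eigenvector (A : Matrix (Fin 3) (Fin 3) ℝ) (hApd : A.PosDef)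
    (k₀ : Fin 3 → ℝ) (hk₀ : k₀ ≠ 0) (lam : ℝ) (heig : (Smat A)ᵀ *ᵥ k₀ = lam • k₀) :
    symb A k₀ = 2 * lam := by
  have hAinv : A.PosDef := hApd
  have hdet : IsUnit A.det := isUnit_iff_ne_zero.mpr (ne_of_gt hApd.det_pos)
  have hAsymm : Aᵀ = A := by
    have := hApd.isHermitian
    simpa [Matrix.IsHermitian, Matrix.conjTranspose_eq_transpose_of_trivial] using this.eq
  have hAinvsymm : (A⁻¹)ᵀ = A⁻¹ := by
    rw [Matrix.transpose_nonsing_inv, hAsymm]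
  -- denominator positive
  have hipd : (A⁻¹).PosDef := hApd.inv
  have hden : 0 < k₀ ⬝ᵥ A⁻¹ *ᵥ k₀ := by
    have := hipd.dotProduct_mulVec_pos hk₀
    simpa using this
  -- antisymmetry of A⁻¹ J A⁻¹
  have hanti : (A⁻¹ * Jmat * A⁻¹)ᵀ = -(A⁻¹ * Jmat * A⁻¹) := by
    rw [Matrix.transpose_mul, Matrix.transpose_mul, hAinvsymm, Jmat_transpose]
    noncomm_ring
  -- dot heig with y := A⁻¹ *ᵥ k₀
  have key : k₀ ⬝ᵥ (Smat A) *ᵥ (A⁻¹ *ᵥ k₀) = lam * (k₀ ⬝ᵥ A⁻¹ *ᵥ k₀) := by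
    have h := congrArg (fun v => v ⬝ᵥ (A⁻¹ *ᵥ k₀)) heig
    simp only [smul_dotProduct] at h
    rw [Matrix.mulVec_transpose, ← Matrix.dotProduct_mulVec] at h
    simpa [smul_eq_mul] using h
  -- simplify LHS
  have hSA : Smat A *ᵥ (A⁻¹ *ᵥ k₀) = (A⁻¹ * Jmat) *ᵥ k₀ - (A⁻¹ * Jmat * A⁻¹) *ᵥ k₀ := by
    rw [Matrix.mulVec_mulVec]
    have : Smat A * A⁻¹ = A⁻¹ * Jmat - A⁻¹ * Jmat * A⁻¹ := by
      unfold Smat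
      rw [mul_assoc (A⁻¹ * Jmat), sub_mul, one_mul,
        Matrix.mul_nonsing_inv A hdet, mul_sub, mul_one]
    rw [this, Matrix.sub_mulVec]
  have hzero : k₀ ⬝ᵥ (A⁻¹ * Jmat * A⁻¹) *ᵥ k₀ = 0 := antisym_zero hanti k₀
  have hnum : k₀ ⬝ᵥ (A⁻¹ * Jmat) *ᵥ k₀ = lam * (k₀ ⬝ᵥ A⁻¹ *ᵥ k₀) := by
    rw [hSA] at key
    rw [dotProduct_sub, hzero, sub_zero] at key
    exact key
  unfold symb
  set d := k₀ ⬝ᵥ A⁻¹ *ᵥ k₀ with hd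
  rw [hnum]
  field_simp
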